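/- If ‖λ̄‖ ≤ C, then Σ_{j∈S} e_j ‖y_j − ȳ‖² ≤ Σ_{j∈S} e_j ‖λ_j − λ̄‖² − Σ_{j∈S^c} e_j (‖λ_j‖ − C)². -/

import Mathlib

/-- The clipping operator `clip_C(v) = min(1, C/‖v‖)·v` (with `clip_C(0) = 0`,
since in Lean `C/0 = 0`). -/
noncomputable def clip {E : Type*} [NormedAddCommGroup E] [InnerProductSpace ℝ E]
    (C : ℝ) (v : E) : E := min 1 (C / ‖v‖) • v

lemma clip_of_le {E : Type*} [NormedAddCommGroup E] [InnerProductSpace ℝ E]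
    {C : ℝ} {v : E} (h : ‖v‖ ≤ C) : clip C v = v := by
  rcases eq_or_ne v 0 with rfl | hv
  · simp [clip]
  · have hvpos : 0 < ‖v‖ := norm_pos_iff.2 hv
    have : (1 : ℝ) ≤ C / ‖v‖ := (one_le_div hvpos).2 h
    simp [clip, min_eq_left this]

lemma clip_of_gt {E : Type*} [NormedAddCommGroup E] [InnerProductSpace ℝ E]
    {C : ℝ} {v : E} (hC : 0 ≤ C) (h : C < ‖v‖) : clip C v = (C / ‖v‖) • v := by
  have hvpos : 0 < ‖v‖ := lt_of_le_of_lt hC h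
  have : C / ‖v‖ ≤ 1 := (div_le_one hvpos).2 h.le
  simp [clip, min_eq_right this]

lemma clip_key {E : Type*} [NormedAddCommGroup E] [InnerProductSpace ℝ E]
    {C : ℝ} (hC : 0 ≤ C) {v m : E} (hv : C < ‖v‖) (hm : ‖m‖ ≤ C) :
    ‖clip C v - m‖ ^ 2 + (‖v‖ - C) ^ 2 ≤ ‖v - m‖ ^ 2 := by
  have hvpos : 0 < ‖v‖ := lt_of_le_of_lt hC hv
  rw [clip_of_gt hC hv]
  have ht : inner ℝ v m ≤ ‖v‖ * C :=
    (real_inner_le_norm v m).trans (mul_le_mul_of_nonneg_left hm (norm_nonneg v))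
  have hr : (C / ‖v‖) * ‖v‖ = C := div_mul_cancel₀ _ (ne_of_gt hvpos)
  have hr1 : C / ‖v‖ ≤ 1 := (div_le_one hvpos).2 hv.le
  have hr0 : 0 ≤ C / ‖v‖ := div_nonneg hC hvpos.le
  rw [norm_sub_sq_real, norm_sub_sq_real, norm_smul, real_inner_smul_left,
    Real.norm_eq_abs, abs_of_nonneg hr0]
  nlinarith [mul_nonneg (sub_nonneg.2 hr1) (sub_nonneg.2 ht), sq_nonneg (‖v‖ - C)]

lemma var_min {E : Type*} [NormedAddCommGroup E] [InnerProductSpace ℝ E]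
    {ι : Type*} (S : Finset ι) (e : ι → ℝ) (hsum : ∑ j ∈ S, e j = 1)
    (y : ι → E) (c : E) :
    ∑ j ∈ S, e j * ‖y j - ∑ k ∈ S, e k • y k‖ ^ 2 ≤ ∑ j ∈ S, e j * ‖y j - c‖ ^ 2 := by
  set yb : E := ∑ k ∈ S, e k • y k with hyb
  have key : ∀ z : E, ∑ j ∈ S, e j * (inner ℝ (y j) z : ℝ) = inner ℝ yb z := by
    intro z
    rw [hyb, sum_inner]
    exact Finset.sum_congr rfl fun j _ => (real_inner_smul_left _ _ _).symm
  have expand : ∀ d : E, ∑ j ∈ S, e j * ‖y j - d‖ ^ 2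
      = (∑ j ∈ S, e j * ‖y j‖ ^ 2) - 2 * (inner ℝ yb d : ℝ) + ‖d‖ ^ 2 := by
    intro d
    have h1 : ∀ j ∈ S, e j * ‖y j - d‖ ^ 2
        = e j * ‖y j‖ ^ 2 - 2 * (e j * (inner ℝ (y j) d : ℝ)) + e j * ‖d‖ ^ 2 := by
      intro j _; rw [norm_sub_sq_real]; ring
    rw [Finset.sum_congr rfl h1, Finset.sum_add_distrib, Finset.sum_sub_distrib,
      ← Finset.mul_sum, key, ← Finset.sum_mul, hsum]
    ring
  rw [expand c, expand yb]
  have h1 : (inner ℝ yb yb : ℝ) = ‖yb‖ ^ 2 := real_inner_self_eq_norm_sq yb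
  have h2 : (0:ℝ) ≤ ‖yb - c‖ ^ 2 := sq_nonneg _
  rw [norm_sub_sq_real] at h2
  linarith

/-- **Variance-reduction property of clipping, case ‖λ̄‖ ≤ C
(Lemma, Case 1).** -/
theorem clipping_variance_reduction_small_mean
    {E : Type*} [NormedAddCommGroup E] [InnerProductSpace ℝ E]
    {ι : Type*} [DecidableEq ι] (S : Finset ι) (hS : S.Nonempty)
    (e : ι → ℝ) (he : ∀ j ∈ S, 0 ≤ e j) (hsum : ∑ j ∈ S, e j = 1)
    (lam : ι → E) (C : ℝ) (hC : 0 ≤ C)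
    (hmean : ‖∑ j ∈ S, e j • lam j‖ ≤ C) :
    ∑ j ∈ S, e j * ‖clip C (lam j) - ∑ k ∈ S, e k • clip C (lam k)‖ ^ 2
      ≤ ∑ j ∈ S, e j * ‖lam j - ∑ k ∈ S, e k • lam k‖ ^ 2
        - ∑ j ∈ S.filter (fun j => C < ‖lam j‖), e j * (‖lam j‖ - C) ^ 2 := by
  classical
  set lb : E := ∑ k ∈ S, e k • lam k with hlb
  have step1 : ∑ j ∈ S, e j * ‖clip C (lam j) - ∑ k ∈ S, e k • clip C (lam k)‖ ^ 2
      ≤ ∑ j ∈ S, e j * ‖clip C (lam j) - lb‖ ^ 2 :=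
    var_min S e hsum (fun j => clip C (lam j)) lb
  have step2 : ∑ j ∈ S, e j * ‖clip C (lam j) - lb‖ ^ 2
      ≤ ∑ j ∈ S, e j * (‖lam j - lb‖ ^ 2 - (if C < ‖lam j‖ then (‖lam j‖ - C) ^ 2 else 0)) := by
    apply Finset.sum_le_sum
    intro j hj
    apply mul_le_mul_of_nonneg_left _ (he j hj)
    by_cases h : C < ‖lam j‖
    · rw [if_pos h]
      have := clip_key hC h hmean
      linarith
    · rw [if_neg h, clip_of_le (not_lt.1 h)]
      simp
  have step3 : ∑ j ∈ S, e j * (‖lam j - lb‖ ^ 2 - (if C < ‖lam j‖ then (‖lam j‖ - C) ^ 2 else 0))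
      = ∑ j ∈ S, e j * ‖lam j - lb‖ ^ 2
        - ∑ j ∈ S.filter (fun j => C < ‖lam j‖), e j * (‖lam j‖ - C) ^ 2 := by
    rw [Finset.sum_filter, ← Finset.sum_sub_distrib]
    apply Finset.sum_congr rfl
    intro j _
    split <;> ring
  linarith
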